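/- Work in the good-parity setting, half-integer case. Let c, n ∈ ℕ and let (𝔪, ε) be the signed symmetric multisegment with 𝔪 = c·[−1/2,1/2] + n·([−1/2,−1/2] + [1/2,1/2]), and (when c ≠ 0) write ε = ε([−1/2,1/2]). Let (*) be the condition: c ≠ 0 and ε = (−1)^{n+1}. Then AD(𝔪, ε) = (𝔪', ε') is of the same shape, 𝔪' = c'·[−1/2,1/2] + n'·([−1/2,−1/2] + [1/2,1/2]) with ε' = ε'([−1/2,1/2]), where: (1) if (*) holds, then c' = n + 1, n' = c − 1 and ε' = (−1)^c; (2) if (*) does not hold, then c' = n, n' = c and ε' = (−1)^c (the value ε' being relevant only when c' ≠ 0). -/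

import Mathlib

namespace AZ

/-- A segment in doubled coordinates: the pair `(a, b)` represents the segment
`[a/2, b/2]` whose endpoints lie in `(1/2)ℤ`.  Thus the end `e(Δ)` is `Δ.2 / 2`,
the beginning `b(Δ)` is `Δ.1 / 2`, `Δ` is centered iff `Δ.1 + Δ.2 = 0`, and
`c(Δ) = 1/2` iff `Δ.1 + Δ.2 = 2`. -/
abbrev Seg := ℤ × ℤ

namespace Seg

/-- Well-formedness of a segment: `a ≤ b` and `a ≡ b [ZMOD 2]`, i.e. `b - a ∈ 2ℕ`. -/
def WF (Δ : Seg) : Prop := Δ.1 ≤ Δ.2 ∧ Δ.1 % 2 = Δ.2 % 2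

/-- The dual (contragredient) segment `Δ∨ = [−b, −a]`. -/
def dual (Δ : Seg) : Seg := (-Δ.2, -Δ.1)

/-- `Δ⁻` : the segment with its end removed. -/
def trimEnd (Δ : Seg) : Seg := (Δ.1, Δ.2 - 2)

/-- `⁻Δ` : the segment with its beginning removed. -/
def trimBeg (Δ : Seg) : Seg := (Δ.1 + 2, Δ.2)

/-- `⁺Δ` : the segment with its beginning extended. -/
def extBeg (Δ : Seg) : Seg := (Δ.1 - 2, Δ.2)

/-- The order on segments: `[x₁,y₁] ≤ [x₂,y₂]` iff `x₁ < x₂`, or `x₁ = x₂` and `y₁ ≥ y₂`. -/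
def le (Δ₁ Δ₂ : Seg) : Prop := Δ₁.1 < Δ₂.1 ∨ (Δ₁.1 = Δ₂.1 ∧ Δ₂.2 ≤ Δ₁.2)

end Seg

/-- Labels `≤0`, `=0`, `≥0` for labeled segments. -/
inductive Label
  | le0 | eq0 | ge0
deriving DecidableEq

/-- Numerical index of a label, used to order the labels `≤0 < =0 < ≥0`. -/
def Label.idx : Label → ℕ
  | .le0 => 0
  | .eq0 => 1
  | .ge0 => 2

/-- A labeled segment: a segment together with a label. -/
abbrev LSeg := Seg × Label

namespace LSeg

/-- The order `⪯` on labeled segments: segments labeled `≤0` precede those labeled `=0`,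
which precede those labeled `≥0`; for equal labels `≥0` or `≤0` one compares the segments,
and for label `=0` one compares the ends. -/
def le (Λ₁ Λ₂ : LSeg) : Prop :=
  Λ₁.2.idx < Λ₂.2.idx ∨
    (Λ₁.2 = Λ₂.2 ∧
      if Λ₁.2 = Label.eq0 then Λ₁.1.2 ≤ Λ₂.1.2 else Seg.le Λ₁.1 Λ₂.1)

/-- The strict order `≺` on labeled segments. -/
def lt (Λ₁ Λ₂ : LSeg) : Prop := LSeg.le Λ₁ Λ₂ ∧ Λ₁ ≠ Λ₂

/-- The contragredient of a labeled segment: for a centered segment the label `≤0`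
becomes `≥0` and the labels `=0`, `≥0` are kept; for a non-centered segment the
label is flipped. -/
def dual (Λ : LSeg) : LSeg :=
  (Seg.dual Λ.1,
    if Λ.1.1 + Λ.1.2 = 0 then (if Λ.2 = Label.le0 then Label.ge0 else Λ.2)
    else
      match Λ.2 with
      | Label.le0 => Label.ge0
      | Label.eq0 => Label.eq0
      | Label.ge0 => Label.le0)

end LSeg

/-- The forced label of a non-centered segment. -/
def forcedLabel (Δ : Seg) : Label := if 0 < Δ.1 + Δ.2 then Label.ge0 else Label.le0

/-- The labeling `s(𝔪)` of a multisegment: each non-centered segment gets its forced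
label; a centered segment of multiplicity `m` contributes `⌊m/2⌋` copies labeled `≤0`,
`⌊m/2⌋` copies labeled `≥0`, and `m − 2⌊m/2⌋` copies labeled `=0`. -/
def smap (m : Multiset Seg) : Multiset LSeg :=
  (m.filter fun Δ => ¬ Δ.1 + Δ.2 = 0).map (fun Δ => (Δ, forcedLabel Δ)) +
    (m.toFinset.filter fun Δ => Δ.1 + Δ.2 = 0).val.bind (fun Δ =>
      Multiset.replicate (m.count Δ / 2) (Δ, Label.le0) +
        Multiset.replicate (m.count Δ / 2) (Δ, Label.ge0) +
        Multiset.replicate (m.count Δ % 2) (Δ, Label.eq0))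

/-- A labeled segment is special (the initial sequence stops there): `[0,0]` labeled
`≥0` or `=0` in the integer case; `[1/2,1/2]`, or `[−1/2,1/2]` labeled `≥0` or `=0`
with `ε([−1/2,1/2]) = −1`, in the half-integer case. -/
def Special (ε : Seg → ℤ) (Λ : LSeg) : Prop :=
  (Λ.1 = ((0 : ℤ), (0 : ℤ)) ∧ (Λ.2 = Label.ge0 ∨ Λ.2 = Label.eq0)) ∨
    Λ.1 = ((1 : ℤ), (1 : ℤ)) ∨
      (Λ.1 = ((-1 : ℤ), (1 : ℤ)) ∧ (Λ.2 = Label.ge0 ∨ Λ.2 = Label.eq0) ∧ ε (-1, 1) = -1)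

instance (ε : Seg → ℤ) (Λ : LSeg) : Decidable (Special ε Λ) := by
  unfold Special; infer_instance

/-- The condition for `next` to be a successor of `cur` in the initial sequence:
`next ≺ cur`, `e(next) = e(cur) − 1`, and opposite signs when both are centered. -/
def Succ (ε : Seg → ℤ) (cur next : LSeg) : Prop :=
  LSeg.lt next cur ∧ next.1.2 = cur.1.2 - 2 ∧
    (cur.1.1 + cur.1.2 = 0 → next.1.1 + next.1.2 = 0 → ε next.1 = - ε cur.1)

/-- `Δ 1, …, Δ l` is the initial sequence in the algorithm for `(m, ε)`:
`Δ 1` is the `⪯`-largest element of `s(m)` with maximal end; recursively,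
`Δ (j+1)` is the `⪯`-largest successor of `Δ j`; the sequence stops when the
current segment is special or no successor exists. -/
structure IsInitSeq (m : Multiset Seg) (ε : Seg → ℤ) (Δ : ℕ → LSeg) (l : ℕ) : Prop where
  one_le : 1 ≤ l
  mem : ∀ j, 1 ≤ j → j ≤ l → Δ j ∈ smap m
  first_max_end : ∀ Λ ∈ smap m, Λ.1.2 ≤ (Δ 1).1.2
  first_max : ∀ Λ ∈ smap m, Λ.1.2 = (Δ 1).1.2 → LSeg.le Λ (Δ 1)
  not_special : ∀ j, 1 ≤ j → j < l → ¬ Special ε (Δ j)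
  succ : ∀ j, 1 ≤ j → j < l → Succ ε (Δ j) (Δ (j + 1))
  succ_max : ∀ j, 1 ≤ j → j < l → ∀ Λ ∈ smap m, Succ ε (Δ j) Λ → LSeg.le Λ (Δ (j + 1))
  last : Special ε (Δ l) ∨ ∀ Λ ∈ smap m, ¬ Succ ε (Δ l) Λ

/-- The sign `ε₀`: `−1` if the sequence stopped at a special segment, `1` otherwise. -/
def eps0 (ε : Seg → ℤ) (Δ : ℕ → LSeg) (l : ℕ) : ℤ :=
  if Special ε (Δ l) then -1 else 1

/-- The number `n₀` of centered segments of `m`. -/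
def nCentered (m : Multiset Seg) : ℕ := (m.filter fun Δ => Δ.1 + Δ.2 = 0).card

/-- The sign `ε₁` of the centered segment `𝔪₁` in the case `ε₀ = −1`:
`(−1)^(n₀+1)·ε([0,0])` in the integer case, `(−1)^(n₀)` in the half-integer case. -/
def epsOne (m : Multiset Seg) (ε : Seg → ℤ) (Δ : ℕ → LSeg) : ℤ :=
  if (Δ 1).1.2 % 2 = 0 then (-1) ^ (nCentered m + 1) * ε (0, 0)
  else (-1) ^ nCentered m

/-- The signed multisegment `𝔪₁`: if `ε₀ = −1` it is the centered segment
`[−e(Δ₁), e(Δ₁)]` with sign `ε₁`; otherwise it is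
`[e(Δ_l), e(Δ₁)] + [−e(Δ₁), −e(Δ_l)]` (non-centered segments carry sign `1`). -/
def mOne (m : Multiset Seg) (ε : Seg → ℤ) (Δ : ℕ → LSeg) (l : ℕ) : Multiset (Seg × ℤ) :=
  if Special ε (Δ l) then {((-(Δ 1).1.2, (Δ 1).1.2), epsOne m ε Δ)}
  else {(((Δ l).1.2, (Δ 1).1.2), 1), ((-(Δ 1).1.2, -(Δ l).1.2), 1)}

/-- The labeled copies `Δ 1, …, Δ l` whose end gets removed. -/
def DEnd (Δ : ℕ → LSeg) (l : ℕ) : Multiset LSeg := (Finset.Icc 1 l).val.map Δ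

/-- The labeled copies (the contragredients of the `Δ j`) whose beginning gets removed. -/
def DBeg (Δ : ℕ → LSeg) (l : ℕ) : Multiset LSeg := (DEnd Δ l).map LSeg.dual

/-- The labeled copies trimmed on both sides. -/
def DBoth (Δ : ℕ → LSeg) (l : ℕ) : Multiset LSeg := DEnd Δ l ∩ DBeg Δ l

/-- The multisegment `𝔪#`: remove the ends of the `Δ j` and the beginnings of their
contragredients (one labeled copy each, both trims if the copy occurs in both lists),
keep all other copies, and discard empty segments. -/
def mHash (m : Multiset Seg) (Δ : ℕ → LSeg) (l : ℕ) : Multiset Seg :=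
  (smap m - DEnd Δ l - (DBeg Δ l - DBoth Δ l)).map Prod.fst +
    ((DBoth Δ l).map (fun Λ => ((Λ.1.1 + 2, Λ.1.2 - 2) : Seg)) +
        (DEnd Δ l - DBoth Δ l).map (fun Λ => ((Λ.1.1, Λ.1.2 - 2) : Seg)) +
        (DBeg Δ l - DBoth Δ l).map (fun Λ => ((Λ.1.1 + 2, Λ.1.2) : Seg))).filter
      fun Δ0 => Δ0.1 ≤ Δ0.2

/-- The trimmed segment `Λ_{i_j}#` obtained from `Δ j`. -/
def trimAt (Δ : ℕ → LSeg) (l : ℕ) (j : ℕ) : Seg :=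
  if Δ j ∈ DBeg Δ l then ((Δ j).1.1 + 2, (Δ j).1.2 - 2)
  else ((Δ j).1.1, (Δ j).1.2 - 2)

/-- The sign function `ε#` on (centered) segments of `𝔪#`. -/
def epsHash (m : Multiset Seg) (ε : Seg → ℤ) (Δ : ℕ → LSeg) (l : ℕ) : Seg → ℤ :=
  fun Δ0 =>
    if ∃ j ∈ Finset.Icc 1 l, ((Δ j).1.1 + (Δ j).1.2 = 0 ∧ trimAt Δ l j = Δ0) then
      eps0 ε Δ l * ε (Δ0.1 - 2, Δ0.2 + 2)
    else if ∃ j ∈ Finset.Icc 1 l,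
        ((Δ j).1.1 + (Δ j).1.2 = 2 ∧ trimAt Δ l j = Δ0 ∧ Δ0 ∉ m) then
      eps0 ε Δ l
    else if ∃ j ∈ Finset.Icc 1 l,
        ((Δ j).1.1 + (Δ j).1.2 = 2 ∧ trimAt Δ l j = Δ0 ∧ Δ0 ∈ m) then
      -(eps0 ε Δ l) * ε Δ0
    else eps0 ε Δ l * ε Δ0

/-- The good-parity duality algorithm `AD`, as a relation between the input `(m, ε)`
and the output signed multisegment: `AD(0) = 0` and
`AD(𝔪, ε) = (𝔪₁, ε₁) + AD(𝔪#, ε#)`. -/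
inductive IsAD : Multiset Seg → (Seg → ℤ) → Multiset (Seg × ℤ) → Prop
  | zero (ε : Seg → ℤ) : IsAD 0 ε 0
  | step {m : Multiset Seg} {ε : Seg → ℤ} {Δ : ℕ → LSeg} {l : ℕ} {d : Multiset (Seg × ℤ)}
      (hm : m ≠ 0) (hseq : IsInitSeq m ε Δ l)
      (hrec : IsAD (mHash m Δ l) (epsHash m ε Δ l) d) :
      IsAD m ε (mOne m ε Δ l + d)

/-- A valid signed symmetric multisegment in the good-parity setting. -/
structure GoodInput (m : Multiset Seg) (ε : Seg → ℤ) : Prop where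
  wf : ∀ Δ0 ∈ m, Seg.WF Δ0
  symm : m.map Seg.dual = m
  parity : ∀ Δ₁ ∈ m, ∀ Δ₂ ∈ m, Δ₁.2 % 2 = Δ₂.2 % 2
  sign : ∀ Δ0, ε Δ0 = 1 ∨ ε Δ0 = -1


private lemma filter_replicate_eq {α : Type*} (p : α → Prop) [DecidablePred p] (n : ℕ) (a : α) :
    (Multiset.replicate n a).filter p = if p a then Multiset.replicate n a else 0 := by
  induction n with
  | zero => simp
  | succ n ih => by_cases h : p a <;>
      simp [Multiset.replicate_succ, Multiset.filter_cons, h, ih]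

private def mseg (c n : ℕ) : Multiset Seg :=
  Multiset.replicate c (((-1 : ℤ), (1 : ℤ)) : Seg) +
    Multiset.replicate n (((-1 : ℤ), (-1 : ℤ)) : Seg) +
    Multiset.replicate n (((1 : ℤ), (1 : ℤ)) : Seg)

private lemma centered_finset (c n : ℕ) :
    ((mseg c n).toFinset.filter fun Δ => Δ.1 + Δ.2 = 0) =
      if c = 0 then ∅ else {(((-1 : ℤ), (1 : ℤ)) : Seg)} := by
  ext x
  by_cases hx : x = (((-1 : ℤ), (1 : ℤ)) : Seg)
  · subst hx
    by_cases hc : c = 0 <;>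
      norm_num [mseg, Multiset.mem_replicate, hc, Finset.mem_filter, Multiset.mem_toFinset,
        Prod.ext_iff] <;> split_ifs <;> norm_num [Prod.ext_iff]
  · have hx0 : x ∈ mseg c n → ¬ x.1 + x.2 = 0 := by
      intro hm
      simp only [mseg, Multiset.mem_add, Multiset.mem_replicate] at hm
      rcases hm with (⟨-, rfl⟩ | ⟨-, rfl⟩) | ⟨-, rfl⟩
      · exact absurd rfl hx
      · norm_num
      · norm_num
    have hnot : ¬(x ∈ (mseg c n).toFinset ∧ x.1 + x.2 = 0) := by
      rintro ⟨h1, h2⟩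
      exact hx0 (Multiset.mem_toFinset.1 h1) h2
    split_ifs with hc <;> simp [Finset.mem_filter, hx, hnot] <;> exact hx0

private lemma count_S0 (c n : ℕ) :
    (mseg c n).count (((-1 : ℤ), (1 : ℤ)) : Seg) = c := by
  norm_num [mseg, Multiset.count_replicate, Prod.ext_iff]

private lemma smap_mseg (c n : ℕ) :
    smap (mseg c n) =
      Multiset.replicate n ((((-1:ℤ),(-1:ℤ)) : Seg), Label.le0) +
        Multiset.replicate n ((((1:ℤ),(1:ℤ)) : Seg), Label.ge0) +
        (Multiset.replicate (c / 2) ((((-1:ℤ),(1:ℤ)) : Seg), Label.le0) +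
          Multiset.replicate (c / 2) ((((-1:ℤ),(1:ℤ)) : Seg), Label.ge0) +
          Multiset.replicate (c % 2) ((((-1:ℤ),(1:ℤ)) : Seg), Label.eq0)) := by
  rw [smap, centered_finset]
  have h1 : (mseg c n).filter (fun Δ => ¬ Δ.1 + Δ.2 = 0) =
      Multiset.replicate n (((-1:ℤ),(-1:ℤ)) : Seg) +
        Multiset.replicate n (((1:ℤ),(1:ℤ)) : Seg) := by
    simp [mseg, Multiset.filter_add, filter_replicate_eq]
  rw [h1]
  have hfl1 : forcedLabel (((-1:ℤ),(-1:ℤ)) : Seg) = Label.le0 := by decide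
  have hfl2 : forcedLabel (((1:ℤ),(1:ℤ)) : Seg) = Label.ge0 := by decide
  by_cases hc : c = 0
  · subst hc
    simp [hfl1, hfl2]
  · rw [if_neg hc]
    simp [hfl1, hfl2, count_S0]

private lemma nCentered_mseg (c n : ℕ) : nCentered (mseg c n) = c := by
  simp [nCentered, mseg, Multiset.filter_add, filter_replicate_eq]

private lemma seq_pin {c n : ℕ} {ε : Seg → ℤ} {Δ : ℕ → LSeg} {l : ℕ}
    (hseq : IsInitSeq (mseg c n) ε Δ l) (hn : n ≠ 0) :
    Δ 1 = ((((1:ℤ),(1:ℤ)) : Seg), Label.ge0) ∧ l = 1 := by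
  have hmem := hseq.mem 1 le_rfl hseq.one_le
  rw [smap_mseg] at hmem
  simp only [Multiset.mem_add, Multiset.mem_replicate, ne_eq] at hmem
  have hPmem : ((((1:ℤ),(1:ℤ)) : Seg), Label.ge0) ∈ smap (mseg c n) := by
    rw [smap_mseg]
    simp only [Multiset.mem_add, Multiset.mem_replicate, ne_eq]
    tauto
  have hend := hseq.first_max_end _ hPmem
  have hΔ1 : Δ 1 = ((((1:ℤ),(1:ℤ)) : Seg), Label.ge0) := by
    rcases hmem with (⟨-, h⟩ | ⟨-, h⟩) | ((⟨-, h⟩ | ⟨-, h⟩) | ⟨-, h⟩)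
    · rw [h] at hend; norm_num at hend
    · exact h
    · have hmax := hseq.first_max _ hPmem (by rw [h])
      rw [h] at hmax
      simp [LSeg.le, Label.idx, Seg.le] at hmax
    · have hmax := hseq.first_max _ hPmem (by rw [h])
      rw [h] at hmax
      simp [LSeg.le, Label.idx, Seg.le] at hmax
    · have hmax := hseq.first_max _ hPmem (by rw [h])
      rw [h] at hmax
      simp [LSeg.le, Label.idx, Seg.le] at hmax
  refine ⟨hΔ1, ?_⟩
  by_contra hl
  have h2 : 1 < l := lt_of_le_of_ne hseq.one_le (Ne.symm hl)
  exact hseq.not_special 1 le_rfl h2 (by rw [hΔ1]; exact Or.inr (Or.inl rfl))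

private lemma seq_pin0 {c : ℕ} {ε : Seg → ℤ} {Δ : ℕ → LSeg} {l : ℕ}
    (hseq : IsInitSeq (mseg c 0) ε Δ l) (hc : c ≠ 0) :
    Δ 1 = ((((-1:ℤ),(1:ℤ)) : Seg), if c = 1 then Label.eq0 else Label.ge0) ∧ l = 1 := by
  have hmem := hseq.mem 1 le_rfl hseq.one_le
  rw [smap_mseg] at hmem
  simp only [Multiset.mem_add, Multiset.mem_replicate, ne_eq, Multiset.replicate_zero,
    zero_add, Multiset.notMem_zero, false_or] at hmem
  have hΔ1 : Δ 1 = ((((-1:ℤ),(1:ℤ)) : Seg), if c = 1 then Label.eq0 else Label.ge0) := by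
    by_cases hc1 : c = 1
    · subst hc1
      rw [if_pos rfl]
      norm_num at hmem
      first
        | exact hmem
        | exact hmem.symm
    · rw [if_neg hc1]
      have hc2 : c / 2 ≠ 0 := by omega
      have hPmem : ((((-1:ℤ),(1:ℤ)) : Seg), Label.ge0) ∈ smap (mseg c 0) := by
        rw [smap_mseg]
        simp only [Multiset.mem_add, Multiset.mem_replicate, ne_eq]
        tauto
      rcases hmem with (⟨-, h⟩ | ⟨-, h⟩) | ⟨-, h⟩
      · have hmax := hseq.first_max _ hPmem (by rw [h])
        rw [h] at hmax
        simp [LSeg.le, Label.idx, Seg.le] at hmax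
      · exact h
      · have hmax := hseq.first_max _ hPmem (by rw [h])
        rw [h] at hmax
        simp [LSeg.le, Label.idx, Seg.le] at hmax
  refine ⟨hΔ1, ?_⟩
  by_contra hl
  have h2 : 1 < l := lt_of_le_of_ne hseq.one_le (Ne.symm hl)
  have hsucc := hseq.succ 1 le_rfl h2
  have hend2 : (Δ 2).1.2 = -1 := by
    have := hsucc.2.1
    rw [hΔ1] at this
    simpa using this
  have hmem2 := hseq.mem 2 (by omega) h2
  rw [smap_mseg] at hmem2
  simp only [Multiset.mem_add, Multiset.mem_replicate, ne_eq, Multiset.replicate_zero,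
    zero_add, Multiset.notMem_zero, false_or] at hmem2
  rcases hmem2 with (⟨-, h⟩ | ⟨-, h⟩) | ⟨-, h⟩ <;> rw [h] at hend2 <;> norm_num at hend2

private lemma epsHash_sign (m : Multiset Seg) (ε : Seg → ℤ) (Δ : ℕ → LSeg) (l : ℕ)
    (hs : ∀ Δ0, ε Δ0 = 1 ∨ ε Δ0 = -1) :
    ∀ Δ0, epsHash m ε Δ l Δ0 = 1 ∨ epsHash m ε Δ l Δ0 = -1 := by
  intro Δ0
  have he : eps0 ε Δ l = 1 ∨ eps0 ε Δ l = -1 := by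
    unfold eps0; split_ifs <;> simp
  unfold epsHash
  split_ifs
  · rcases he with h | h <;> rcases hs (Δ0.1 - 2, Δ0.2 + 2) with h2 | h2 <;> simp [h, h2]
  · exact he
  · rcases he with h | h <;> rcases hs Δ0 with h2 | h2 <;> simp [h, h2]
  · rcases he with h | h <;> rcases hs Δ0 with h2 | h2 <;> simp [h, h2]

private def expect (c n : ℕ) (e : ℤ) : Multiset (Seg × ℤ) :=
  if c ≠ 0 ∧ e = (-1) ^ (n + 1) then
    Multiset.replicate (n + 1) ((((-1 : ℤ), (1 : ℤ)) : Seg), (-1) ^ c) +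
      Multiset.replicate (c - 1) ((((-1 : ℤ), (-1 : ℤ)) : Seg), 1) +
      Multiset.replicate (c - 1) ((((1 : ℤ), (1 : ℤ)) : Seg), 1)
  else
    Multiset.replicate n ((((-1 : ℤ), (1 : ℤ)) : Seg), (-1) ^ c) +
      Multiset.replicate c ((((-1 : ℤ), (-1 : ℤ)) : Seg), 1) +
      Multiset.replicate c ((((1 : ℤ), (1 : ℤ)) : Seg), 1)

private lemma assemble_a (c k : ℕ) (e : ℤ) :
    ({((((-1:ℤ),(1:ℤ)) : Seg), (-1)^c)} : Multiset (Seg × ℤ)) + expect c k (-e) =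
      expect c (k + 1) e := by
  have hiff : (c ≠ 0 ∧ -e = (-1)^(k+1)) ↔ (c ≠ 0 ∧ e = (-1)^(k+1+1)) := by
    constructor <;> rintro ⟨h1, h2⟩ <;> refine ⟨h1, ?_⟩
    · have h3 : e = -((-1:ℤ)^(k+1)) := by linarith
      rw [h3, pow_succ]; ring
    · rw [h2, pow_succ]; ring
  rw [expect, expect]
  by_cases hA : c ≠ 0 ∧ -e = (-1)^(k+1)
  · rw [if_pos hA, if_pos (hiff.1 hA)]
    simp only [Multiset.replicate_succ, ← Multiset.singleton_add]
    abel
  · rw [if_neg hA, if_neg fun h => hA (hiff.2 h)]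
    simp only [Multiset.replicate_succ, ← Multiset.singleton_add]
    abel

private lemma key : ∀ N c n (ε : Seg → ℤ) (d : Multiset (Seg × ℤ)), c + n ≤ N →
    (∀ Δ0, ε Δ0 = 1 ∨ ε Δ0 = -1) → IsAD (mseg c n) ε d →
    d = expect c n (ε (((-1:ℤ),(1:ℤ)) : Seg)) := by
  intro N
  induction N with
  | zero =>
    intro c n ε d hle hsign had
    obtain ⟨rfl, rfl⟩ : c = 0 ∧ n = 0 := by omega
    have hm : mseg 0 0 = 0 := by simp [mseg]
    rw [hm] at had
    cases had with
    | zero => simp [expect]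
    | step hm' hseq hrec => exact absurd rfl hm'
  | succ N ih =>
    intro c n ε d hle hsign had
    generalize hM : mseg c n = M at had
    cases had with
    | zero =>
      have hcard := congrArg Multiset.card hM
      simp [mseg] at hcard
      obtain ⟨rfl, rfl⟩ : c = 0 ∧ n = 0 := by omega
      simp [expect]
    | @step m ε' Δ l d' hm hseq hrec =>
      subst hM
      by_cases hn : n = 0
      · -- the case n = 0, c ≠ 0
        subst hn
        have hc : c ≠ 0 := by
          intro h
          exact hm (by simp [h, mseg])
        obtain ⟨hΔ1, hl⟩ := seq_pin0 hseq hc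
        subst hl
        have hdual : LSeg.dual (Δ 1) = Δ 1 := by
          rw [hΔ1]
          by_cases hc1 : c = 1 <;> simp only [hc1, if_pos, if_neg, if_true, if_false] <;> decide
        have hDEnd : DEnd Δ 1 = {Δ 1} := by
          simp [DEnd, Finset.Icc_self]
        have hDBeg : DBeg Δ 1 = {Δ 1} := by
          show (DEnd Δ 1).map LSeg.dual = _
          rw [hDEnd, Multiset.map_singleton, hdual]
        have hDBoth : DBoth Δ 1 = {Δ 1} := by
          show DEnd Δ 1 ∩ DBeg Δ 1 = _
          rw [hDEnd, hDBeg]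
          ext x
          simp [Multiset.count_inter]
        have htrim : trimAt Δ 1 1 = (((1:ℤ), (-1:ℤ)) : Seg) := by
          rw [trimAt, if_pos (by rw [hDBeg]; exact Multiset.mem_singleton_self _), hΔ1]
          norm_num
        have hSpecIff : Special ε (Δ 1) ↔ ε (((-1:ℤ),(1:ℤ)) : Seg) = -1 := by
          rw [hΔ1]
          unfold Special
          by_cases hc1 : c = 1 <;>
            simp only [hc1, if_pos, if_neg, if_true, if_false] <;>
            norm_num [Prod.ext_iff]
        obtain ⟨R, hR, hRmap⟩ : ∃ R : Multiset LSeg, smap (mseg c 0) - {Δ 1} = R ∧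
            R.map Prod.fst = Multiset.replicate (c - 1) (((-1:ℤ),(1:ℤ)) : Seg) := by
          by_cases hc1 : c = 1
          · refine ⟨0, ?_, by simp [hc1]⟩
            subst hc1
            rw [smap_mseg, hΔ1]
            norm_num [Multiset.replicate_one]
          · have hc2 : c / 2 ≠ 0 := by omega
            obtain ⟨j, hj⟩ : ∃ j, c / 2 = j + 1 := ⟨c / 2 - 1, by omega⟩
            refine ⟨Multiset.replicate (c / 2) ((((-1:ℤ),(1:ℤ)) : Seg), Label.le0) +
              Multiset.replicate j ((((-1:ℤ),(1:ℤ)) : Seg), Label.ge0) +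
              Multiset.replicate (c % 2) ((((-1:ℤ),(1:ℤ)) : Seg), Label.eq0), ?_, ?_⟩
            · rw [smap_mseg, hΔ1, if_neg hc1]
              have hS : Multiset.replicate 0 ((((-1:ℤ),(-1:ℤ)) : Seg), Label.le0) +
                  Multiset.replicate 0 ((((1:ℤ),(1:ℤ)) : Seg), Label.ge0) +
                  (Multiset.replicate (c / 2) ((((-1:ℤ),(1:ℤ)) : Seg), Label.le0) +
                    Multiset.replicate (c / 2) ((((-1:ℤ),(1:ℤ)) : Seg), Label.ge0) +
                    Multiset.replicate (c % 2) ((((-1:ℤ),(1:ℤ)) : Seg), Label.eq0)) =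
                  (Multiset.replicate (c / 2) ((((-1:ℤ),(1:ℤ)) : Seg), Label.le0) +
                    Multiset.replicate j ((((-1:ℤ),(1:ℤ)) : Seg), Label.ge0) +
                    Multiset.replicate (c % 2) ((((-1:ℤ),(1:ℤ)) : Seg), Label.eq0)) +
                    {((((-1:ℤ),(1:ℤ)) : Seg), Label.ge0)} := by
                rw [hj]
                simp only [Multiset.replicate_succ, Multiset.replicate_zero,
                  ← Multiset.singleton_add]
                abel
              rw [hS, add_tsub_cancel_right]
            · simp only [Multiset.map_add, Multiset.map_replicate]
              rw [← Multiset.replicate_add, ← Multiset.replicate_add]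
              congr 1
              omega
        have hmHash : mHash (mseg c 0) Δ 1 = mseg (c-1) 0 := by
          rw [mHash, hDEnd, hDBeg, hDBoth, tsub_self, Multiset.sub_zero, hR,
            Multiset.map_singleton, hΔ1]
          rw [hRmap]
          simp only [Multiset.map_zero, add_zero]
          rw [Multiset.filter_singleton, if_neg (by norm_num)]
          simp [mseg]
        rw [hmHash] at hrec
        have hd' := ih (c-1) 0 (epsHash (mseg c 0) ε Δ 1) d' (by omega)
          (epsHash_sign _ _ _ _ hsign) hrec
        rcases hsign (((-1:ℤ),(1:ℤ)) : Seg) with he | he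
        · -- ε([-1/2,1/2]) = 1 : not special
          have hnSpec : ¬ Special ε (Δ 1) := by
            rw [hSpecIff, he]
            norm_num
          have heps : epsHash (mseg c 0) ε Δ 1 (((-1:ℤ),(1:ℤ)) : Seg) = 1 := by
            rw [epsHash]
            rw [if_neg, if_neg, if_neg]
            · rw [eps0, if_neg hnSpec, he]
              norm_num
            · simp only [Finset.Icc_self, Finset.mem_singleton, exists_eq_left]
              rintro ⟨h1, -, -⟩
              rw [hΔ1] at h1
              norm_num at h1
            · simp only [Finset.Icc_self, Finset.mem_singleton, exists_eq_left]
              rintro ⟨h1, -, -⟩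
              rw [hΔ1] at h1
              norm_num at h1
            · simp only [Finset.Icc_self, Finset.mem_singleton, exists_eq_left]
              rintro ⟨-, h2⟩
              rw [htrim] at h2
              norm_num [Prod.ext_iff] at h2
          rw [heps] at hd'
          have hmOne : mOne (mseg c 0) ε Δ 1 =
              {((((1:ℤ),(1:ℤ)) : Seg), 1), ((((-1:ℤ),(-1:ℤ)) : Seg), 1)} := by
            rw [mOne, if_neg hnSpec, hΔ1]
          rw [hmOne, hd', he]
          rw [expect, expect, if_neg (by norm_num), if_neg (by norm_num)]
          obtain ⟨j, rfl⟩ : ∃ j, c = j + 1 := ⟨c - 1, by omega⟩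
          simp only [Nat.add_sub_cancel, Multiset.replicate_zero, Multiset.replicate_succ,
            ← Multiset.singleton_add, Multiset.insert_eq_cons, zero_add]
          abel
        · -- ε([-1/2,1/2]) = -1 : special
          have hSpec : Special ε (Δ 1) := hSpecIff.2 he
          have heps : epsHash (mseg c 0) ε Δ 1 (((-1:ℤ),(1:ℤ)) : Seg) = 1 := by
            rw [epsHash]
            rw [if_neg, if_neg, if_neg]
            · rw [eps0, if_pos hSpec, he]
              norm_num
            · simp only [Finset.Icc_self, Finset.mem_singleton, exists_eq_left]
              rintro ⟨h1, -, -⟩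
              rw [hΔ1] at h1
              norm_num at h1
            · simp only [Finset.Icc_self, Finset.mem_singleton, exists_eq_left]
              rintro ⟨h1, -, -⟩
              rw [hΔ1] at h1
              norm_num at h1
            · simp only [Finset.Icc_self, Finset.mem_singleton, exists_eq_left]
              rintro ⟨-, h2⟩
              rw [htrim] at h2
              norm_num [Prod.ext_iff] at h2
          rw [heps] at hd'
          have hmOne : mOne (mseg c 0) ε Δ 1 =
              {((((-1:ℤ),(1:ℤ)) : Seg), (-1)^c)} := by
            rw [mOne, if_pos hSpec, epsOne, nCentered_mseg, hΔ1]
            norm_num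
          rw [hmOne, hd', he]
          rw [expect, expect, if_neg (by norm_num), if_pos ⟨hc, by norm_num⟩]
          simp only [Multiset.replicate_zero, Multiset.replicate_one, zero_add,
            Multiset.replicate_succ, ← Multiset.singleton_add]
          abel
      · -- the case n ≠ 0
        obtain ⟨k, rfl⟩ : ∃ k, n = k + 1 := ⟨n - 1, by omega⟩
        obtain ⟨hΔ1, hl⟩ := seq_pin hseq hn
        subst hl
        have hDEnd : DEnd Δ 1 = {((((1:ℤ),(1:ℤ)) : Seg), Label.ge0)} := by
          simp [DEnd, Finset.Icc_self, hΔ1]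
        have hDBeg : DBeg Δ 1 = {((((-1:ℤ),(-1:ℤ)) : Seg), Label.le0)} := by
          show (DEnd Δ 1).map LSeg.dual = _
          rw [hDEnd]
          decide
        have hDBoth : DBoth Δ 1 = 0 := by
          show DEnd Δ 1 ∩ DBeg Δ 1 = 0
          rw [hDEnd, hDBeg]
          decide
        have hSpec : Special ε (Δ 1) := by
          rw [hΔ1]; exact Or.inr (Or.inl rfl)
        have hmOne : mOne (mseg c (k+1)) ε Δ 1 =
            {((((-1:ℤ),(1:ℤ)) : Seg), (-1)^c)} := by
          rw [mOne, if_pos hSpec, epsOne, nCentered_mseg, hΔ1]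
          norm_num
        have hmHash : mHash (mseg c (k+1)) Δ 1 = mseg c k := by
          rw [mHash, hDEnd, hDBeg, hDBoth, smap_mseg]
          have hS : Multiset.replicate (k+1) ((((-1:ℤ),(-1:ℤ)) : Seg), Label.le0) +
              Multiset.replicate (k+1) ((((1:ℤ),(1:ℤ)) : Seg), Label.ge0) +
              (Multiset.replicate (c / 2) ((((-1:ℤ),(1:ℤ)) : Seg), Label.le0) +
                Multiset.replicate (c / 2) ((((-1:ℤ),(1:ℤ)) : Seg), Label.ge0) +
                Multiset.replicate (c % 2) ((((-1:ℤ),(1:ℤ)) : Seg), Label.eq0)) =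
              (Multiset.replicate k ((((-1:ℤ),(-1:ℤ)) : Seg), Label.le0) +
                Multiset.replicate k ((((1:ℤ),(1:ℤ)) : Seg), Label.ge0) +
                (Multiset.replicate (c / 2) ((((-1:ℤ),(1:ℤ)) : Seg), Label.le0) +
                  Multiset.replicate (c / 2) ((((-1:ℤ),(1:ℤ)) : Seg), Label.ge0) +
                  Multiset.replicate (c % 2) ((((-1:ℤ),(1:ℤ)) : Seg), Label.eq0)) +
                {((((-1:ℤ),(-1:ℤ)) : Seg), Label.le0)}) +
                {((((1:ℤ),(1:ℤ)) : Seg), Label.ge0)} := by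
            simp only [Multiset.replicate_succ, ← Multiset.singleton_add]
            abel
          rw [hS, Multiset.sub_zero, add_tsub_cancel_right, add_tsub_cancel_right]
          have hC : Multiset.replicate (c / 2) (((-1:ℤ),(1:ℤ)) : Seg) +
              Multiset.replicate (c / 2) (((-1:ℤ),(1:ℤ)) : Seg) +
              Multiset.replicate (c % 2) (((-1:ℤ),(1:ℤ)) : Seg) =
              Multiset.replicate c (((-1:ℤ),(1:ℤ)) : Seg) := by
            rw [← Multiset.replicate_add, ← Multiset.replicate_add]
            congr 1
            omega
          simp only [Multiset.map_add, Multiset.map_replicate, Multiset.map_singleton,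
            Multiset.filter_add, Multiset.filter_singleton, Multiset.sub_zero]
          norm_num [mseg, hC]
          abel
        -- the sign passed to the recursion
        have heps : epsHash (mseg c (k+1)) ε Δ 1 (((-1:ℤ),(1:ℤ)) : Seg) =
            - ε (((-1:ℤ),(1:ℤ)) : Seg) := by
          have htrim : trimAt Δ 1 1 = (((1:ℤ), (-1:ℤ)) : Seg) := by
            rw [trimAt, hDBeg, hΔ1]
            norm_num
          rw [epsHash]
          rw [if_neg, if_neg, if_neg]
          · rw [eps0, if_pos hSpec]
            ring
          · simp only [Finset.Icc_self, Finset.mem_singleton, exists_eq_left]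
            rintro ⟨h1, h2, -⟩
            rw [htrim] at h2
            norm_num [Prod.ext_iff] at h2
          · simp only [Finset.Icc_self, Finset.mem_singleton, exists_eq_left]
            rintro ⟨h1, h2, -⟩
            rw [htrim] at h2
            norm_num [Prod.ext_iff] at h2
          · simp only [Finset.Icc_self, Finset.mem_singleton, exists_eq_left]
            rintro ⟨h1, h2⟩
            rw [hΔ1] at h1
            norm_num at h1
        rw [hmHash] at hrec
        have hd' := ih c k (epsHash (mseg c (k+1)) ε Δ 1) d' (by omega)
          (epsHash_sign _ _ _ _ hsign) hrec
        rw [heps] at hd'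
        rw [hmOne, hd']
        exact assemble_a c k (ε (((-1:ℤ),(1:ℤ)) : Seg))
  
/-- Proposition 10.3.1: explicit computation of `AD` on
`𝔪 = c·[−1/2,1/2] + n·([−1/2,−1/2] + [1/2,1/2])` (half-integer case). -/
theorem stmt17 (c n : ℕ) (ε : Seg → ℤ)
    (hsign : ∀ Δ0 : Seg, ε Δ0 = 1 ∨ ε Δ0 = -1)
    (d : Multiset (Seg × ℤ))
    (had : IsAD
      (Multiset.replicate c (((-1 : ℤ), (1 : ℤ)) : Seg) +
        Multiset.replicate n (((-1 : ℤ), (-1 : ℤ)) : Seg) +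
        Multiset.replicate n (((1 : ℤ), (1 : ℤ)) : Seg))
      ε d) :
    (c ≠ 0 ∧ ε (-1, 1) = (-1) ^ (n + 1) →
      d = Multiset.replicate (n + 1) ((((-1 : ℤ), (1 : ℤ)) : Seg), (-1) ^ c) +
        Multiset.replicate (c - 1) ((((-1 : ℤ), (-1 : ℤ)) : Seg), 1) +
        Multiset.replicate (c - 1) ((((1 : ℤ), (1 : ℤ)) : Seg), 1)) ∧
    (¬(c ≠ 0 ∧ ε (-1, 1) = (-1) ^ (n + 1)) →
      d = Multiset.replicate n ((((-1 : ℤ), (1 : ℤ)) : Seg), (-1) ^ c) +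
        Multiset.replicate c ((((-1 : ℤ), (-1 : ℤ)) : Seg), 1) +
        Multiset.replicate c ((((1 : ℤ), (1 : ℤ)) : Seg), 1)) := by
  have hd := key (c + n) c n ε d le_rfl hsign had
  constructor
  · intro h
    rw [hd, expect, if_pos h]
  · intro h
    rw [hd, expect, if_neg h]

end AZ
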